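/- Let ρ : [0,∞) → [0,∞) be continuous, non-decreasing, concave with ρ(0)=0, ρ(r)>0 for r>0, and ∫_{0+} dr/ρ(r) = ∞. Let P > 0 and let (u_m)_{m≥0} be uniformly bounded nonnegative measurable functions on [0,T] satisfying u_m(t) ≤ P·∫_t^T ρ(u_{m−1}(s)) ds for all m ≥ 1, t ∈ [0,T]. Then α(t) := limsup_{m→∞} u_m(t) satisfies α(t) ≤ P·∫_t^T ρ(α(s)) ds, and consequently lim_{m→∞} sup over the sequence gives α(t) = 0 for all t ∈ [0,T]. -/

import Mathlib

open Set MeasureTheory Filter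

theorem stmt_9 (T P : ℝ) (hT : 0 < T) (hP : 0 < P)
    (ρ : ℝ → ℝ)
    (hρ_cont : ContinuousOn ρ (Ici 0))
    (hρ_mono : MonotoneOn ρ (Ici 0))
    (hρ_concave : ∀ x ∈ Ici (0:ℝ), ∀ y ∈ Ici (0:ℝ), ∀ t ∈ Icc (0:ℝ) 1,
      t * ρ x + (1 - t) * ρ y ≤ ρ (t * x + (1 - t) * y))
    (hρ0 : ρ 0 = 0)
    (hρ_pos : ∀ r > (0:ℝ), 0 < ρ r)
    (hρ_div : ∀ ε > (0:ℝ), ¬ IntegrableOn (fun r => 1 / ρ r) (Ioc 0 ε) volume)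
    (u : ℕ → ℝ → ℝ)
    (hmeas : ∀ m, Measurable (u m))
    (hnonneg : ∀ m, ∀ t ∈ Icc 0 T, 0 ≤ u m t)
    (M : ℝ) (hbdd : ∀ m, ∀ t ∈ Icc 0 T, u m t ≤ M)
    (hrec : ∀ m : ℕ, ∀ t ∈ Icc 0 T, u (m + 1) t ≤ P * ∫ s in t..T, ρ (u m s))
    (α : ℝ → ℝ) (hα : ∀ t, α t = limsup (fun m => u m t) atTop) :
    (∀ t ∈ Icc 0 T, α t ≤ P * ∫ s in t..T, ρ (α s)) ∧
    (∀ t ∈ Icc 0 T, α t = 0) := by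
  -- ρ' : global continuous monotone extension of ρ
  set ρ' : ℝ → ℝ := fun r => ρ (max r 0) with hρ'def
  have hρ'_cont : Continuous ρ' :=
    hρ_cont.comp_continuous (continuous_id.max continuous_const) (fun x => mem_Ici.2 (le_max_right _ _))
  have hρ'_mono : Monotone ρ' := fun a b hab =>
    hρ_mono (mem_Ici.2 (le_max_right _ _)) (mem_Ici.2 (le_max_right _ _)) (max_le_max hab le_rfl)
  have hρ'_eq : ∀ r, 0 ≤ r → ρ' r = ρ r := fun r hr => by simp [hρ'def, max_eq_left hr]
  have hρ'_nonneg : ∀ r, 0 ≤ ρ' r := fun r =>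
    hρ0 ▸ hρ_mono (mem_Ici.2 (le_refl (0:ℝ))) (mem_Ici.2 (le_max_right _ _)) (le_max_right _ _)
  have hρ'_pos : ∀ r > (0:ℝ), 0 < ρ' r := fun r hr => (hρ'_eq r hr.le) ▸ hρ_pos r hr
  have hM : 0 ≤ M := le_trans (hnonneg 0 0 ⟨le_refl 0, hT.le⟩) (hbdd 0 0 ⟨le_refl 0, hT.le⟩)
  -- interval integrability of globally bounded measurable functions
  have hII : ∀ (f : ℝ → ℝ) (C : ℝ), Measurable f → (∀ x, |f x| ≤ C) →
      ∀ a b : ℝ, IntervalIntegrable f volume a b := by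
    intro f C hf hC a b
    rw [intervalIntegrable_iff]
    have hconst : IntegrableOn (fun _ : ℝ => C) (Set.uIoc a b) volume :=
      integrableOn_const (by show volume (Ioc (min a b) (max a b)) ≠ ⊤; exact measure_Ioc_lt_top.ne)
    refine hconst.mono' hf.aestronglyMeasurable ?_
    exact Eventually.of_forall fun x => by simpa using hC x
  -- interval integrability from a bound on [a, b]
  have hII2 : ∀ (f : ℝ → ℝ) (C : ℝ) (a b : ℝ), a ≤ b → Measurable f →
      (∀ x ∈ Icc a b, |f x| ≤ C) → IntervalIntegrable f volume a b := by
    intro f C a b hab hf hC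
    rw [intervalIntegrable_iff_integrableOn_Ioc_of_le hab]
    have hconst : IntegrableOn (fun _ : ℝ => C) (Ioc a b) volume :=
      integrableOn_const measure_Ioc_lt_top.ne
    refine hconst.mono' hf.aestronglyMeasurable ?_
    filter_upwards [ae_restrict_mem measurableSet_Ioc] with x hx
    simpa using hC x (Ioc_subset_Icc_self hx)
  -- the ENNReal-valued tail suprema
  set V : ℕ → ℝ → ENNReal := fun m t => ⨆ i, ENNReal.ofReal (u (i + m) t) with hV
  have hV_meas : ∀ m, Measurable (V m) := fun m =>
    Measurable.iSup fun i => (hmeas (i + m)).ennreal_ofReal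
  have hV_le : ∀ m, ∀ t ∈ Icc 0 T, V m t ≤ ENNReal.ofReal M := fun m t ht =>
    iSup_le fun i => ENNReal.ofReal_le_ofReal (hbdd _ t ht)
  have hV_ne : ∀ m, ∀ t ∈ Icc 0 T, V m t ≠ ⊤ := fun m t ht =>
    ((hV_le m t ht).trans_lt ENNReal.ofReal_lt_top).ne
  have hV_anti : ∀ t, Antitone (fun m => V m t) := by
    intro t a b hab
    refine iSup_le fun i => ?_
    have h : i + b = (i + (b - a)) + a := by omega
    rw [h]
    exact le_iSup (fun j => ENNReal.ofReal (u (j + a) t)) (i + (b - a))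
  set v : ℕ → ℝ → ℝ := fun m t => (V m t).toReal with hv
  have hv_meas : ∀ m, Measurable (v m) := fun m => (hV_meas m).ennreal_toReal
  have hv_nonneg : ∀ m t, 0 ≤ v m t := fun m t => ENNReal.toReal_nonneg
  have hv_le : ∀ m, ∀ t ∈ Icc 0 T, v m t ≤ M := fun m t ht =>
    ENNReal.toReal_le_of_le_ofReal hM (hV_le m t ht)
  have hu_le_v : ∀ m i, ∀ t ∈ Icc 0 T, u (i + m) t ≤ v m t := by
    intro m i t ht
    have h1 : ENNReal.ofReal (u (i + m) t) ≤ V m t :=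
      le_iSup (fun j => ENNReal.ofReal (u (j + m) t)) i
    have h2 := ENNReal.toReal_mono (hV_ne m t ht) h1
    rwa [ENNReal.toReal_ofReal (hnonneg _ t ht)] at h2
  -- the limit function
  set αb : ℝ → ℝ := fun t => min (⨅ m, V m t).toReal M with hαb
  have hαb_meas : Measurable αb :=
    ((Measurable.iInf hV_meas).ennreal_toReal).min measurable_const
  have hαb_nonneg : ∀ t, 0 ≤ αb t := fun t => le_min ENNReal.toReal_nonneg hM
  have hαb_le : ∀ t, αb t ≤ M := fun t => min_le_right _ _
  have hαb_eq : ∀ t ∈ Icc 0 T, αb t = (⨅ m, V m t).toReal := fun t ht =>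
    min_eq_left (ENNReal.toReal_le_of_le_ofReal hM ((iInf_le _ 0).trans (hV_le 0 t ht)))
  have hv_tendsto : ∀ t ∈ Icc 0 T, Tendsto (fun m => v m t) atTop (nhds (αb t)) := by
    intro t ht
    rw [hαb_eq t ht]
    have h1 : Tendsto (fun m => V m t) atTop (nhds (⨅ m, V m t)) :=
      tendsto_atTop_iInf (hV_anti t)
    have h2 : (⨅ m, V m t) ≠ ⊤ := ((iInf_le _ 0).trans_lt
      ((hV_le 0 t ht).trans_lt ENNReal.ofReal_lt_top)).ne
    exact (ENNReal.tendsto_toReal h2).comp h1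
  have hαb_le_v : ∀ m, ∀ t ∈ Icc 0 T, αb t ≤ v m t := by
    intro m t ht
    rw [hαb_eq t ht]
    exact ENNReal.toReal_mono (hV_ne m t ht) (iInf_le _ m)
  -- key sub-interval facts
  have hsub : ∀ t ∈ Icc 0 T, ∀ x ∈ Icc t T, x ∈ Icc (0:ℝ) T :=
    fun t ht x hx => ⟨ht.1.trans hx.1, hx.2⟩
  -- recursion for v
  have hv_rec : ∀ m : ℕ, ∀ t ∈ Icc 0 T, v (m + 1) t ≤ P * ∫ s in t..T, ρ' (v m s) := by
    intro m t ht
    have hvm_int : IntervalIntegrable (fun s => ρ' (v m s)) volume t T := by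
      refine hII2 _ (ρ' M) t T ht.2 (hρ'_cont.measurable.comp (hv_meas m)) ?_
      intro x hx
      rw [abs_of_nonneg (hρ'_nonneg _)]
      exact hρ'_mono (hv_le m x (hsub t ht x hx))
    have hRHS : 0 ≤ P * ∫ s in t..T, ρ' (v m s) :=
      mul_nonneg hP.le (intervalIntegral.integral_nonneg ht.2 fun s _ => hρ'_nonneg _)
    have hchain : ∀ i : ℕ, u (i + (m + 1)) t ≤ P * ∫ s in t..T, ρ' (v m s) := by
      intro i
      have e1 : i + (m + 1) = (i + m) + 1 := by omega
      have h1 : u ((i + m) + 1) t ≤ P * ∫ s in t..T, ρ (u (i + m) s) := hrec (i + m) t ht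
      have h2 : (∫ s in t..T, ρ (u (i + m) s)) = ∫ s in t..T, ρ' (u (i + m) s) := by
        refine intervalIntegral.integral_congr fun s hs => ?_
        rw [uIcc_of_le ht.2] at hs
        exact (hρ'_eq _ (hnonneg _ s (hsub t ht s hs))).symm
      have hui_int : IntervalIntegrable (fun s => ρ' (u (i + m) s)) volume t T := by
        refine hII2 _ (ρ' M) t T ht.2 (hρ'_cont.measurable.comp (hmeas (i + m))) ?_
        intro x hx
        rw [abs_of_nonneg (hρ'_nonneg _)]
        exact hρ'_mono (hbdd _ x (hsub t ht x hx))
      have h3 : (∫ s in t..T, ρ' (u (i + m) s)) ≤ ∫ s in t..T, ρ' (v m s) := by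
        refine intervalIntegral.integral_mono_on ht.2 hui_int hvm_int fun x hx => ?_
        exact hρ'_mono (hu_le_v m i x (hsub t ht x hx))
      rw [e1]
      calc u ((i + m) + 1) t ≤ P * ∫ s in t..T, ρ (u (i + m) s) := h1
        _ = P * ∫ s in t..T, ρ' (u (i + m) s) := by rw [h2]
        _ ≤ P * ∫ s in t..T, ρ' (v m s) := mul_le_mul_of_nonneg_left h3 hP.le
    refine ENNReal.toReal_le_of_le_ofReal hRHS (iSup_le fun i => ?_)
    exact (ENNReal.ofReal_le_ofReal (hchain i)).trans le_rfl
  -- pass to the limit: the limsup inequality for αb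
  have hkey : ∀ t ∈ Icc 0 T, αb t ≤ P * ∫ s in t..T, ρ' (αb s) := by
    intro t ht
    have h1 : ∀ m, αb t ≤ P * ∫ s in t..T, ρ' (v m s) := fun m =>
      (hαb_le_v (m + 1) t ht).trans (hv_rec m t ht)
    have h2 : Tendsto (fun m => P * ∫ s in t..T, ρ' (v m s)) atTop
        (nhds (P * ∫ s in t..T, ρ' (αb s))) := by
      refine Tendsto.const_mul P ?_
      refine intervalIntegral.tendsto_integral_filter_of_dominated_convergence
        (fun _ => ρ' M) ?_ ?_ ?_ ?_
      · exact Eventually.of_forall fun m =>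
          (hρ'_cont.measurable.comp (hv_meas m)).aestronglyMeasurable
      · refine Eventually.of_forall fun m => Eventually.of_forall fun x hx => ?_
        rw [uIoc_of_le ht.2] at hx
        have hx' : x ∈ Icc (0:ℝ) T := hsub t ht x (Ioc_subset_Icc_self hx)
        rw [Real.norm_eq_abs, abs_of_nonneg (hρ'_nonneg _)]
        exact hρ'_mono (hv_le m x hx')
      · exact continuous_const.intervalIntegrable t T
      · refine Eventually.of_forall fun x hx => ?_
        rw [uIoc_of_le ht.2] at hx
        have hx' : x ∈ Icc (0:ℝ) T := hsub t ht x (Ioc_subset_Icc_self hx)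
        exact (hρ'_cont.tendsto (αb x)).comp (hv_tendsto x hx')
    exact ge_of_tendsto h2 (Eventually.of_forall h1)
  -- the continuous majorants w and w2
  have hg_meas : Measurable fun s => ρ' (αb s) := hρ'_cont.measurable.comp hαb_meas
  have hg_bd : ∀ x, |ρ' (αb x)| ≤ ρ' M := fun x => by
    rw [abs_of_nonneg (hρ'_nonneg _)]; exact hρ'_mono (hαb_le x)
  have hg_int : ∀ a b : ℝ, IntervalIntegrable (fun s => ρ' (αb s)) volume a b :=
    hII _ (ρ' M) hg_meas hg_bd
  set w : ℝ → ℝ := fun t => P * ∫ s in t..T, ρ' (αb s) with hwdef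
  have hw_cont : Continuous w := by
    have h1 : Continuous fun t => ∫ s in T..t, ρ' (αb s) :=
      intervalIntegral.continuous_primitive hg_int T
    have h2 : w = fun t => P * -(∫ s in T..t, ρ' (αb s)) := by
      funext t
      show (P * ∫ s in t..T, ρ' (αb s)) = _
      rw [intervalIntegral.integral_symm T t]
    rw [h2]
    exact continuous_const.mul h1.neg
  have hαb_le_w : ∀ t ∈ Icc 0 T, αb t ≤ w t := hkey
  set w2 : ℝ → ℝ := fun t => P * ∫ s in t..T, ρ' (w s) with hw2def
  have hρ'w_cont : Continuous fun s => ρ' (w s) := hρ'_cont.comp hw_cont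
  have hw_le_w2 : ∀ t ∈ Icc 0 T, w t ≤ w2 t := by
    intro t ht
    refine mul_le_mul_of_nonneg_left ?_ hP.le
    refine intervalIntegral.integral_mono_on ht.2 (hg_int t T)
      (hρ'w_cont.intervalIntegrable t T) fun x hx => ?_
    exact hρ'_mono (hαb_le_w x (hsub t ht x hx))
  have hw2_nonneg : ∀ t ∈ Icc 0 T, 0 ≤ w2 t := fun t ht =>
    mul_nonneg hP.le (intervalIntegral.integral_nonneg ht.2 fun s _ => hρ'_nonneg _)
  have hw2_deriv : ∀ t, HasDerivAt w2 (-(P * ρ' (w t))) t := by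
    intro t
    have hG : HasDerivAt (fun x => ∫ s in T..x, ρ' (w s)) (ρ' (w t)) t :=
      intervalIntegral.integral_hasDerivAt_right (hρ'w_cont.intervalIntegrable T t)
        (hρ'w_cont.stronglyMeasurableAtFilter _ _) hρ'w_cont.continuousAt
    have h1 : HasDerivAt (fun x => P * -(∫ s in T..x, ρ' (w s))) (P * -(ρ' (w t))) t :=
      hG.neg.const_mul P
    have h2 : w2 = fun x => P * -(∫ s in T..x, ρ' (w s)) := by
      funext x
      show (P * ∫ s in x..T, ρ' (w s)) = _
      rw [intervalIntegral.integral_symm T x]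
    rw [h2]
    simpa using h1
  have hw2_cont : Continuous w2 := by
    have hdiff : Differentiable ℝ w2 := fun t => (hw2_deriv t).differentiableAt
    exact hdiff.continuous
  have hw2T : w2 T = 0 := by
    rw [hw2def]
    simp
  -- Bihari's argument: w2 ≤ 0 on [0, T]
  have hw2_zero : ∀ t ∈ Icc 0 T, w2 t ≤ 0 := by
    intro t0 ht0
    by_contra hpos
    push_neg at hpos
    set c := w2 t0 with hc
    have hclaim : ∀ ε : ℝ, 0 < ε → ε ≤ c → (∫ r in ε..c, (ρ' r)⁻¹) ≤ P * T := by
      intro ε hε hεc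
      set q : ℝ → ℝ := fun r => (ρ' (max r ε))⁻¹ with hq
      have hq_cont : Continuous q := by
        refine ((hρ'_cont.comp (continuous_id.max continuous_const)).inv₀ ?_)
        intro x
        exact (hρ'_pos _ (lt_of_lt_of_le hε (le_max_right x ε))).ne'
      have hq_nonneg : ∀ r, 0 ≤ q r := fun r => inv_nonneg.2 (hρ'_nonneg _)
      set F : ℝ → ℝ := fun x => ∫ r in ε..x, q r with hF
      have hF_deriv : ∀ x, HasDerivAt F (q x) x := fun x =>
        intervalIntegral.integral_hasDerivAt_right (hq_cont.intervalIntegrable ε x)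
          (hq_cont.stronglyMeasurableAtFilter _ _) hq_cont.continuousAt
      have hF_cont : Continuous F :=
        intervalIntegral.continuous_primitive (fun a b => hq_cont.intervalIntegrable a b) ε
      set h : ℝ → ℝ := fun t => F (w2 t + ε) + P * t with hh
      have hh_deriv : ∀ t, HasDerivAt h (q (w2 t + ε) * -(P * ρ' (w t)) + P) t := by
        intro t
        have h1 : HasDerivAt (fun x => w2 x + ε) (-(P * ρ' (w t))) t :=
          (hw2_deriv t).add_const ε
        have h2 : HasDerivAt (fun x => F (w2 x + ε)) (q (w2 t + ε) * -(P * ρ' (w t))) t :=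
          by have := (hF_deriv (w2 t + ε)).comp t h1; exact this
        exact (h2.add ((hasDerivAt_id t).const_mul P)).congr_deriv (by ring)
      have hmono : MonotoneOn h (Icc 0 T) := by
        refine monotoneOn_of_deriv_nonneg (convex_Icc 0 T)
          ((hF_cont.comp (hw2_cont.add continuous_const)).add
            (continuous_const.mul continuous_id)).continuousOn
          (fun x _ => (hh_deriv x).differentiableAt.differentiableWithinAt) ?_
        intro x hx
        rw [interior_Icc] at hx
        have hx' : x ∈ Icc (0:ℝ) T := Ioo_subset_Icc_self hx
        rw [(hh_deriv x).deriv]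
        have h1 : 0 ≤ w2 x := hw2_nonneg x hx'
        have h2 : w x ≤ w2 x + ε := by
          have := hw_le_w2 x hx'
          linarith
        have h3 : ρ' (w x) ≤ ρ' (w2 x + ε) := hρ'_mono h2
        have h4 : 0 < ρ' (w2 x + ε) := hρ'_pos _ (by linarith)
        have h5 : q (w2 x + ε) = (ρ' (w2 x + ε))⁻¹ := by
          rw [hq]
          simp only
          rw [max_eq_left (by linarith : ε ≤ w2 x + ε)]
        rw [h5]
        have h6 : (ρ' (w2 x + ε))⁻¹ * ρ' (w x) ≤ 1 := by
          rw [← inv_mul_cancel₀ h4.ne']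
          exact mul_le_mul_of_nonneg_left h3 (inv_nonneg.2 h4.le)
        have h7 : 0 ≤ (ρ' (w2 x + ε))⁻¹ := inv_nonneg.2 h4.le
        nlinarith [hρ'_nonneg (w x)]
      have hT_mem : T ∈ Icc (0:ℝ) T := ⟨hT.le, le_rfl⟩
      have hle : h t0 ≤ h T := hmono ht0 hT_mem ht0.2
      have hhT : h T = P * T := by
        rw [hh]
        simp only
        rw [hw2T, zero_add, hF]
        simp
      have hFc : F c ≤ F (c + ε) := by
        have e1 : F (c + ε) = F c + ∫ r in c..(c + ε), q r := by
          rw [hF]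
          exact (intervalIntegral.integral_add_adjacent_intervals
            (hq_cont.intervalIntegrable ε c) (hq_cont.intervalIntegrable c (c + ε))).symm
        rw [e1]
        have : 0 ≤ ∫ r in c..(c + ε), q r :=
          intervalIntegral.integral_nonneg (by linarith) fun r _ => hq_nonneg r
        linarith
      have hFq : (∫ r in ε..c, (ρ' r)⁻¹) = F c := by
        rw [hF]
        refine intervalIntegral.integral_congr fun r hr => ?_
        rw [uIcc_of_le hεc] at hr
        rw [hq]
        simp only
        rw [max_eq_left hr.1]
      have ht0' : F (c + ε) + P * t0 ≤ P * T := by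
        have e1 : h t0 = F (c + ε) + P * t0 := rfl
        rw [e1, hhT] at hle
        exact hle
      have : 0 ≤ P * t0 := mul_nonneg hP.le ht0.1
      linarith [hFc, hFq, ht0']
    -- contradiction with non-integrability
    refine hρ_div c hpos ?_
    have hinv_meas : Measurable fun r : ℝ => (ρ' r)⁻¹ := hρ'_cont.measurable.inv
    have key : ∀ n : ℕ, (∫⁻ r in Ioc (c / (n + 1)) c, ENNReal.ofReal ((ρ' r)⁻¹)) ≤
        ENNReal.ofReal (P * T) := by
      intro n
      have hn1 : (0:ℝ) < n + 1 := by positivity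
      have hεn : 0 < c / (n + 1) := div_pos hpos hn1
      have hεc : c / (n + 1) ≤ c := by
        have hn2 : (1:ℝ) ≤ (n:ℝ) + 1 := by
          have : (0:ℝ) ≤ n := Nat.cast_nonneg n
          linarith
        exact div_le_self hpos.le hn2
      have hint : IntegrableOn (fun r => (ρ' r)⁻¹) (Ioc (c / (n + 1)) c) volume := by
        have hcont : ContinuousOn (fun r => (ρ' r)⁻¹) (Icc (c / (n + 1)) c) := by
          refine (hρ'_cont.continuousOn.inv₀ fun x hx => ?_)
          exact (hρ'_pos x (lt_of_lt_of_le hεn hx.1)).ne'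
        exact (hcont.integrableOn_Icc).mono_set Ioc_subset_Icc_self
      rw [← ofReal_integral_eq_lintegral_ofReal hint
        (Eventually.of_forall fun r => inv_nonneg.2 (hρ'_nonneg r))]
      refine ENNReal.ofReal_le_ofReal ?_
      rw [← intervalIntegral.integral_of_le hεc]
      exact hclaim _ hεn hεc
    have hunion : (∫⁻ r in Ioc (0:ℝ) c, ENNReal.ofReal ((ρ' r)⁻¹)) ≤
        ENNReal.ofReal (P * T) := by
      set fn : ℕ → ℝ → ENNReal := fun n =>
        (Ioc (c / (n + 1)) c).indicator fun r => ENNReal.ofReal ((ρ' r)⁻¹) with hfn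
      have hfn_meas : ∀ n, Measurable (fn n) := fun n =>
        (hinv_meas.ennreal_ofReal).indicator measurableSet_Ioc
      have hfn_mono : Monotone fn := by
        intro a b hab
        refine indicator_le_indicator_of_subset (Ioc_subset_Ioc_left ?_) (fun r => zero_le)
        have h1 : (0:ℝ) < a + 1 := by positivity
        have h2 : (a:ℝ) + 1 ≤ (b:ℝ) + 1 := by
          have : (a:ℝ) ≤ b := by exact_mod_cast hab
          linarith
        exact div_le_div_of_nonneg_left hpos.le h1 h2
      have hfn_sup : ∀ r, (⨆ n, fn n r) =
          (Ioc (0:ℝ) c).indicator (fun r => ENNReal.ofReal ((ρ' r)⁻¹)) r := by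
        intro r
        by_cases hr : r ∈ Ioc (0:ℝ) c
        · rw [indicator_of_mem hr]
          obtain ⟨n, hn⟩ : ∃ n : ℕ, c / (n + 1) < r := by
            obtain ⟨n, hn⟩ := exists_nat_gt (c / r)
            refine ⟨n, ?_⟩
            rw [div_lt_iff₀ (by positivity)]
            have hrne : r ≠ 0 := ne_of_gt hr.1
            have e : r * (c / r) = c := by field_simp
            have h1 : r * (c / r) < r * n := mul_lt_mul_of_pos_left hn hr.1
            nlinarith [hr.1]
          refine le_antisymm (iSup_le fun m => ?_) ?_
          · exact Set.indicator_le_self' (fun x _ => zero_le) r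
          · have hmem : r ∈ Ioc (c / (n + 1)) c := ⟨hn, hr.2⟩
            calc ENNReal.ofReal ((ρ' r)⁻¹) = fn n r := by
                  simp only [hfn]; rw [indicator_of_mem hmem]
              _ ≤ ⨆ k, fn k r := le_iSup (fun k => fn k r) n
        · rw [indicator_of_notMem hr]
          refine le_antisymm (iSup_le fun n => ?_) zero_le
          have hnm : r ∉ Ioc (c / (n + 1)) c := fun hmem =>
            hr ⟨lt_of_lt_of_le (div_pos hpos (by positivity)) hmem.1.le, hmem.2⟩
          simp only [hfn]
          rw [indicator_of_notMem hnm]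
      calc (∫⁻ r in Ioc (0:ℝ) c, ENNReal.ofReal ((ρ' r)⁻¹))
          = ∫⁻ r, (Ioc (0:ℝ) c).indicator (fun r => ENNReal.ofReal ((ρ' r)⁻¹)) r :=
            (lintegral_indicator measurableSet_Ioc _).symm
        _ = ∫⁻ r, ⨆ n, fn n r := by
            congr 1; funext r; rw [hfn_sup r]
        _ = ⨆ n, ∫⁻ r, fn n r := lintegral_iSup hfn_meas hfn_mono
        _ ≤ ENNReal.ofReal (P * T) := by
            refine iSup_le fun n => ?_
            simp only [hfn]
            rw [lintegral_indicator measurableSet_Ioc]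
            exact key n
    have hInt' : IntegrableOn (fun r => (ρ' r)⁻¹) (Ioc 0 c) volume := by
      refine ⟨hinv_meas.aestronglyMeasurable, ?_⟩
      rw [hasFiniteIntegral_iff_ofReal
        (Eventually.of_forall fun r => inv_nonneg.2 (hρ'_nonneg r))]
      exact hunion.trans_lt ENNReal.ofReal_lt_top
    refine hInt'.congr_fun (fun r hr => ?_) measurableSet_Ioc
    simp only [hρ'_eq r hr.1.le, one_div]
  -- conclude
  have hαb_zero : ∀ t ∈ Icc 0 T, αb t = 0 := by
    intro t ht
    have h1 := hαb_le_w t ht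
    have h2 := hw_le_w2 t ht
    have h3 := hw2_zero t ht
    have h4 := hαb_nonneg t
    linarith
  have hα_zero : ∀ t ∈ Icc 0 T, α t = 0 := by
    intro t ht
    have hb : IsBoundedUnder (· ≤ ·) atTop (fun m => u m t) :=
      ⟨M, eventually_map.2 (Eventually.of_forall fun m => hbdd m t ht)⟩
    have h0 : 0 ≤ α t := by
      rw [hα t]
      exact le_limsup_of_frequently_le (Frequently.of_forall fun m => hnonneg m t ht) hb
    have h1 : ∀ m, α t ≤ v m t := by
      intro m
      rw [hα t]
      refine limsup_le_of_le ?_ ?_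
      · exact IsBoundedUnder.isCoboundedUnder_le
          ⟨0, eventually_map.2 (Eventually.of_forall fun m => hnonneg m t ht)⟩
      · filter_upwards [eventually_ge_atTop m] with i hi
        have e : i = (i - m) + m := by omega
        rw [e]
        exact hu_le_v m (i - m) t ht
    have h2 : α t ≤ αb t := ge_of_tendsto (hv_tendsto t ht) (Eventually.of_forall h1)
    have h3 := hαb_zero t ht
    linarith
  refine ⟨?_, hα_zero⟩
  intro t ht
  have hzero_int : (∫ s in t..T, ρ (α s)) = 0 := by
    rw [intervalIntegral.integral_congr (g := fun _ => (0:ℝ))]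
    · simp
    · intro s hs
      rw [uIcc_of_le ht.2] at hs
      have hs' : s ∈ Icc (0:ℝ) T := hsub t ht s hs
      simp [hα_zero s hs', hρ0]
  rw [hzero_int, hα_zero t ht]
  simp
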